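/- In the Threshold Algorithm's analysis with T = 1, g < 1/2, γ with γ + g > 3/2, and total cut length Σ t_i ≥ 3/2: conditioned on Z₁ = w^{(β)}(X \ {π(j)}) < 1/2 − g and Z₂ = w^{(γ)}(Y \ {π(j)}) < 1 − 2g, if article j with y^{(β)}(j) > 0 arrives in the second phase (π(j) ∈ Y), then h_j ≥ ρ_X^{(1/2)} and the total length of all articles the algorithm accepts from Y \ {π(j)} is at most g + Z₂ < 1 − g, so the algorithm reads article j completely (s_j = t_j). -/

import Mathlib

open Finset

/-- Exchange argument: in an optimal fractional KPH solution, if `y i₁ > 0` and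
`y i₂ < 1` for two distinct items, then `h i₂ ≤ h i₁`. -/
lemma kph_exchange {n : ℕ} (t h : Fin n → ℝ) (S : Finset (Fin n)) (c : ℝ)
    (y : Fin n → ℝ) (ht : ∀ i, 0 < t i)
    (hy01 : ∀ i, y i ∈ Set.Icc (0:ℝ) 1) (hsupp : ∀ i, i ∉ S → y i = 0)
    (hw : ∑ i, t i * y i ≤ c)
    (hopt : ∀ z : Fin n → ℝ, (∀ i, z i ∈ Set.Icc (0:ℝ) 1) → (∀ i, i ∉ S → z i = 0) →
      (∑ i, t i * z i ≤ c) → ∑ i, t i * h i * z i ≤ ∑ i, t i * h i * y i)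
    {i₁ i₂ : Fin n} (hne : i₁ ≠ i₂) (hi₁S : i₁ ∈ S) (hi₂S : i₂ ∈ S)
    (h1 : 0 < y i₁) (h2 : y i₂ < 1) : h i₂ ≤ h i₁ := by
  by_contra hlt
  push_neg at hlt
  set ε := min (t i₁ * y i₁) (t i₂ * (1 - y i₂)) with hε
  have hεpos : 0 < ε := lt_min (mul_pos (ht i₁) h1) (mul_pos (ht i₂) (by linarith))
  have ht1 : (t i₁) ≠ 0 := ne_of_gt (ht i₁)
  have ht2 : (t i₂) ≠ 0 := ne_of_gt (ht i₂)
  set z : Fin n → ℝ := fun k => if k = i₁ then y i₁ - ε / t i₁ else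
      if k = i₂ then y i₂ + ε / t i₂ else y k with hz
  have hz1 : z i₁ = y i₁ - ε / t i₁ := by simp [hz]
  have hz2 : z i₂ = y i₂ + ε / t i₂ := by simp [hz, hne.symm]
  have hzother : ∀ k, k ≠ i₁ → k ≠ i₂ → z k = y k := by
    intro k hk1 hk2; simp [hz, hk1, hk2]
  have hd1 : ε / t i₁ ≤ y i₁ := by
    rw [div_le_iff₀ (ht i₁)]
    calc ε ≤ t i₁ * y i₁ := min_le_left _ _
    _ = y i₁ * t i₁ := by ring
  have hd2 : ε / t i₂ ≤ 1 - y i₂ := by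
    rw [div_le_iff₀ (ht i₂)]
    calc ε ≤ t i₂ * (1 - y i₂) := min_le_right _ _
    _ = (1 - y i₂) * t i₂ := by ring
  have hdiv1pos : 0 < ε / t i₁ := div_pos hεpos (ht i₁)
  have hdiv2pos : 0 < ε / t i₂ := div_pos hεpos (ht i₂)
  have hz01 : ∀ i, z i ∈ Set.Icc (0:ℝ) 1 := by
    intro k
    rcases eq_or_ne k i₁ with rfl | hk1
    · rw [hz1]; constructor
      · linarith
      · have := (hy01 k).2; linarith
    rcases eq_or_ne k i₂ with rfl | hk2
    · rw [hz2]; constructor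
      · have := (hy01 k).1; linarith
      · linarith
    · rw [hzother k hk1 hk2]; exact hy01 k
  have hzsupp : ∀ i, i ∉ S → z i = 0 := by
    intro k hk
    have hk1 : k ≠ i₁ := by rintro rfl; exact hk hi₁S
    have hk2 : k ≠ i₂ := by rintro rfl; exact hk hi₂S
    rw [hzother k hk1 hk2]; exact hsupp k hk
  have key : ∀ f : Fin n → ℝ, ∑ k, f k * z k =
      ∑ k, f k * y k + f i₂ * (ε / t i₂) - f i₁ * (ε / t i₁) := by
    intro f
    have h0 : ∀ k ∈ (univ : Finset (Fin n)), k ∉ ({i₁, i₂} : Finset (Fin n)) →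
        f k * z k - f k * y k = 0 := by
      intro k _ hk
      simp only [mem_insert, mem_singleton, not_or] at hk
      rw [hzother k hk.1 hk.2]; ring
    have := Finset.sum_subset (Finset.subset_univ ({i₁, i₂} : Finset (Fin n))) h0
    rw [Finset.sum_pair hne] at this
    rw [Finset.sum_sub_distrib] at this
    rw [hz1, hz2] at this
    have : (∑ k, f k * z k) - ∑ k, f k * y k =
        f i₂ * (ε / t i₂) - f i₁ * (ε / t i₁) := by
      rw [← this]; ring
    linarith
  have hwz : ∑ k, t k * z k = ∑ k, t k * y k := by
    rw [key t]
    have e1 : t i₁ * (ε / t i₁) = ε := by field_simp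
    have e2 : t i₂ * (ε / t i₂) = ε := by field_simp
    rw [e1, e2]; ring
  have hobj : ∑ k, t k * h k * z k = ∑ k, t k * h k * y k + ε * (h i₂ - h i₁) := by
    have := key (fun k => t k * h k)
    have e1 : t i₁ * h i₁ * (ε / t i₁) = ε * h i₁ := by field_simp
    have e2 : t i₂ * h i₂ * (ε / t i₂) = ε * h i₂ := by field_simp
    calc ∑ k, t k * h k * z k = ∑ k, (fun k => t k * h k) k * z k := by
          apply Finset.sum_congr rfl; intro k _; ring
    _ = ∑ k, (fun k => t k * h k) k * y k + t i₂ * h i₂ * (ε / t i₂)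
          - t i₁ * h i₁ * (ε / t i₁) := this
    _ = ∑ k, t k * h k * y k + ε * (h i₂ - h i₁) := by
          rw [e1, e2]; ring
  have := hopt z hz01 hzsupp (by rw [hwz]; exact hw)
  rw [hobj] at this
  nlinarith


/-- Fullness: an optimal fractional KPH solution fills the knapsack when there is
enough total length available. -/
lemma kph_full {n : ℕ} (t h : Fin n → ℝ) (S : Finset (Fin n)) (c : ℝ)
    (y : Fin n → ℝ) (ht : ∀ i, 0 < t i) (hh : ∀ i, 0 < h i)
    (hy01 : ∀ i, y i ∈ Set.Icc (0:ℝ) 1) (hsupp : ∀ i, i ∉ S → y i = 0)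
    (hw : ∑ i, t i * y i ≤ c)
    (hopt : ∀ z : Fin n → ℝ, (∀ i, z i ∈ Set.Icc (0:ℝ) 1) → (∀ i, i ∉ S → z i = 0) →
      (∑ i, t i * z i ≤ c) → ∑ i, t i * h i * z i ≤ ∑ i, t i * h i * y i)
    (hc : c ≤ ∑ i ∈ S, t i) : ∑ i, t i * y i = c := by
  by_contra hne
  have hlt : ∑ i, t i * y i < c := lt_of_le_of_ne hw hne
  -- find i ∈ S with y i < 1
  have hex : ∃ i ∈ S, y i < 1 := by
    by_contra hno
    push_neg at hno
    have hfull : ∑ i, t i * y i = ∑ i ∈ S, t i * y i := by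
      refine (Finset.sum_subset (Finset.subset_univ S) ?_).symm
      intro k _ hk; rw [hsupp k hk]; ring
    have hge : ∑ i ∈ S, t i ≤ ∑ i ∈ S, t i * y i := by
      apply Finset.sum_le_sum
      intro k hk
      nlinarith [ht k, hno k hk, (hy01 k).2]
    linarith [hfull ▸ hlt]
  obtain ⟨i, hiS, hi1⟩ := hex
  set ε := min (1 - y i) ((c - ∑ k, t k * y k) / t i) with hε
  have hεpos : 0 < ε :=
    lt_min (by linarith) (div_pos (by linarith) (ht i))
  set z : Fin n → ℝ := fun k => if k = i then y i + ε else y k with hz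
  have hzother : ∀ k, k ≠ i → z k = y k := by intro k hk; simp [hz, hk]
  have hzi : z i = y i + ε := by simp [hz]
  have hεle : ε ≤ 1 - y i := min_le_left _ _
  have hεle2 : t i * ε ≤ c - ∑ k, t k * y k := by
    have := min_le_right (1 - y i) ((c - ∑ k, t k * y k) / t i)
    rw [le_div_iff₀ (ht i)] at this
    calc t i * ε = ε * t i := by ring
    _ ≤ c - ∑ k, t k * y k := this
  have hz01 : ∀ k, z k ∈ Set.Icc (0:ℝ) 1 := by
    intro k
    rcases eq_or_ne k i with rfl | hk
    · rw [hzi]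
      exact ⟨by linarith [(hy01 k).1], by linarith⟩
    · rw [hzother k hk]; exact hy01 k
  have hzsupp : ∀ k, k ∉ S → z k = 0 := by
    intro k hk
    have : k ≠ i := by rintro rfl; exact hk hiS
    rw [hzother k this]; exact hsupp k hk
  have key : ∀ f : Fin n → ℝ, ∑ k, f k * z k = ∑ k, f k * y k + f i * ε := by
    intro f
    have h0 : ∀ k ∈ (univ : Finset (Fin n)), k ∉ ({i} : Finset (Fin n)) →
        f k * z k - f k * y k = 0 := by
      intro k _ hk
      simp only [mem_singleton] at hk
      rw [hzother k hk]; ring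
    have := Finset.sum_subset (Finset.subset_univ ({i} : Finset (Fin n))) h0
    rw [Finset.sum_singleton, Finset.sum_sub_distrib, hzi] at this
    have : (∑ k, f k * z k) - ∑ k, f k * y k = f i * ε := by rw [← this]; ring
    linarith
  have hwz : ∑ k, t k * z k ≤ c := by rw [key t]; linarith
  have hobj := hopt z hz01 hzsupp hwz
  have : ∑ k, t k * h k * z k = ∑ k, t k * h k * y k + t i * h i * ε := by
    have := key (fun k => t k * h k)
    simpa using this
  nlinarith [mul_pos (mul_pos (ht i) (hh i)) hεpos]

/-- **key claim of the Threshold Algorithm analysis.** Budget scaled to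
`T = 1`; all article lengths satisfy `0 < t i ≤ g` with `g < 1/2`; hints `h i` are
positive and pairwise distinct; `γ + g > 3/2`, `γ ≤ Σ t i`, `Σ t i ≥ 3/2`.  Let `yβ`,
`yγ` be optimal fractional KPH solutions at capacities `β ∈ (0,1]` and `γ > 1` over
all articles, let `X` be the sample phase and `Y = Xᶜ` the selection phase, let `yX`
be the optimal fractional KPH solution on `X` with capacity `1/2`, and let `ρ` be its
threshold hint.  Suppose article `j` has `yβ j > 0` and arrives in the second phase
(`j ∉ X`), and that `Z₁ = Σ_{i∈X} t i · yβ i < 1/2 − g` and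
`Z₂ = Σ_{i∈Y∖{j}} t i · yγ i < 1 − 2g`.  Then `h j ≥ ρ` and the total length of all
articles the algorithm accepts from `Y ∖ {j}` (those with hint `≥ ρ`) is at most
`g + Z₂ < 1 − g`; hence, since `t j ≤ g`, the algorithm reads article `j`
completely. -/
theorem threshold_algorithm_claim (n : ℕ) (t h : Fin n → ℝ) (g β γ ρ : ℝ)
    (X : Finset (Fin n)) (j : Fin n) (yβ yγ yX : Fin n → ℝ)
    (ht : ∀ i, 0 < t i) (htg : ∀ i, t i ≤ g)
    (hdist : Function.Injective h) (hhpos : ∀ i, 0 < h i)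
    (hg : 0 < g) (hg2 : g < 1 / 2)
    (hβpos : 0 < β) (hβ1 : β ≤ 1)
    (hγ1 : 1 < γ) (hγg : 3 / 2 < γ + g) (hγsum : γ ≤ ∑ i, t i)
    (hsum : 3 / 2 ≤ ∑ i, t i)
    -- yβ is the optimal fractional solution at capacity β
    (hyβ01 : ∀ i, yβ i ∈ Set.Icc (0:ℝ) 1) (hyβw : ∑ i, t i * yβ i ≤ β)
    (hyβopt : ∀ y : Fin n → ℝ, (∀ i, y i ∈ Set.Icc (0:ℝ) 1) →
      (∑ i, t i * y i ≤ β) → ∑ i, t i * h i * y i ≤ ∑ i, t i * h i * yβ i)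
    -- yγ is the optimal fractional solution at capacity γ
    (hyγ01 : ∀ i, yγ i ∈ Set.Icc (0:ℝ) 1) (hyγw : ∑ i, t i * yγ i ≤ γ)
    (hyγopt : ∀ y : Fin n → ℝ, (∀ i, y i ∈ Set.Icc (0:ℝ) 1) →
      (∑ i, t i * y i ≤ γ) → ∑ i, t i * h i * y i ≤ ∑ i, t i * h i * yγ i)
    -- yX is the optimal fractional solution on the sample X at capacity 1/2
    (hyX01 : ∀ i, yX i ∈ Set.Icc (0:ℝ) 1) (hyXQ : ∀ i, i ∉ X → yX i = 0)
    (hyXw : ∑ i, t i * yX i ≤ 1 / 2)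
    (hyXopt : ∀ y : Fin n → ℝ, (∀ i, y i ∈ Set.Icc (0:ℝ) 1) → (∀ i, i ∉ X → y i = 0) →
      (∑ i, t i * y i ≤ 1 / 2) → ∑ i, t i * h i * y i ≤ ∑ i, t i * h i * yX i)
    -- ρ is the threshold hint of yX
    (hρ : ∀ i ∈ X, (ρ < h i → yX i = 1) ∧ (h i < ρ → yX i = 0))
    -- article j: in the β-solution, arriving in the selection phase
    (hj : 0 < yβ j) (hjY : j ∉ X)
    -- the conditioning events
    (hZ1 : ∑ i ∈ X, t i * yβ i < 1 / 2 - g)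
    (hZ2 : ∑ i ∈ Xᶜ.erase j, t i * yγ i < 1 - 2 * g) :
    ρ ≤ h j ∧
    (∑ i ∈ (Xᶜ.erase j).filter (fun i => ρ ≤ h i), t i)
        ≤ g + ∑ i ∈ Xᶜ.erase j, t i * yγ i ∧
    (∑ i ∈ (Xᶜ.erase j).filter (fun i => ρ ≤ h i), t i) + t j ≤ 1 := by
  have hoptβ : ∀ z : Fin n → ℝ, (∀ i, z i ∈ Set.Icc (0:ℝ) 1) →
      (∀ i, i ∉ (univ : Finset (Fin n)) → z i = 0) →
      (∑ i, t i * z i ≤ β) → ∑ i, t i * h i * z i ≤ ∑ i, t i * h i * yβ i :=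
    fun z h1 _ h3 => hyβopt z h1 h3
  have hoptγ : ∀ z : Fin n → ℝ, (∀ i, z i ∈ Set.Icc (0:ℝ) 1) →
      (∀ i, i ∉ (univ : Finset (Fin n)) → z i = 0) →
      (∑ i, t i * z i ≤ γ) → ∑ i, t i * h i * z i ≤ ∑ i, t i * h i * yγ i :=
    fun z h1 _ h3 => hyγopt z h1 h3
  -- the γ-solution is full
  have hγfull : ∑ i, t i * yγ i = γ :=
    kph_full t h univ γ yγ ht hhpos hyγ01 (by simp) hyγw hoptγ (by simpa using hγsum)
  have hjY' : j ∈ Xᶜ := Finset.mem_compl.mpr hjY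
  have hYsplit : ∑ i ∈ Xᶜ.erase j, t i * yγ i + t j * yγ j = ∑ i ∈ Xᶜ, t i * yγ i :=
    Finset.sum_erase_add _ _ hjY'
  have htjγ : t j * yγ j ≤ g := by
    nlinarith [ht j, htg j, (hyγ01 j).1, (hyγ01 j).2]
  have hYlt : ∑ i ∈ Xᶜ, t i * yγ i < 1 - g := by linarith
  have hcompl : ∑ i ∈ X, t i * yγ i + ∑ i ∈ Xᶜ, t i * yγ i = γ := by
    rw [Finset.sum_add_sum_compl]; exact hγfull
  have hXγ : 1 / 2 < ∑ i ∈ X, t i * yγ i := by linarith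
  have hXt : 1 / 2 ≤ ∑ i ∈ X, t i := by
    have : ∑ i ∈ X, t i * yγ i ≤ ∑ i ∈ X, t i := by
      apply Finset.sum_le_sum
      intro k _
      nlinarith [ht k, (hyγ01 k).2]
    linarith
  -- the sample solution is full
  have hXfullu : ∑ i, t i * yX i = 1 / 2 :=
    kph_full t h X (1 / 2) yX ht hhpos hyX01 hyXQ hyXw hyXopt hXt
  have hXsupp : ∑ i, t i * yX i = ∑ i ∈ X, t i * yX i :=
    (Finset.sum_subset (Finset.subset_univ X) (fun k _ hk => by rw [hyXQ k hk]; ring)).symm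
  have hXfull : ∑ i ∈ X, t i * yX i = 1 / 2 := by rw [← hXsupp]; exact hXfullu
  -- Part 1 : ρ ≤ h j
  have part1 : ρ ≤ h j := by
    by_contra hcon
    push_neg at hcon
    have hex : ∃ i ∈ X, yβ i < yX i := by
      by_contra hno
      push_neg at hno
      have : ∑ i ∈ X, t i * yX i ≤ ∑ i ∈ X, t i * yβ i := by
        apply Finset.sum_le_sum
        intro k hk
        exact mul_le_mul_of_nonneg_left (hno k hk) (le_of_lt (ht k))
      linarith
    obtain ⟨i, hiX, hilt⟩ := hex
    have hyXipos : 0 < yX i := lt_of_le_of_lt (hyβ01 i).1 hilt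
    have hρi : ρ ≤ h i := by
      by_contra hcc
      push_neg at hcc
      have := (hρ i hiX).2 hcc
      linarith
    have hij : j ≠ i := by rintro rfl; exact hjY hiX
    have hβi1 : yβ i < 1 := lt_of_lt_of_le hilt (hyX01 i).2
    have := kph_exchange t h univ β yβ ht hyβ01 (by simp) hyβw hoptβ hij
      (Finset.mem_univ _) (Finset.mem_univ _) hj hβi1
    linarith
  -- every accepted article in Y ∖ {j} is fully in the γ-solution
  have hγall : ∀ k ∈ Xᶜ.erase j, ρ ≤ h k → yγ k = 1 := by
    intro k hk hρk
    by_contra hklt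
    have hk1 : yγ k < 1 := lt_of_le_of_ne (hyγ01 k).2 hklt
    have hex2 : ∃ i ∈ X, yX i < yγ i := by
      by_contra hno
      push_neg at hno
      have : ∑ i ∈ X, t i * yγ i ≤ ∑ i ∈ X, t i * yX i := by
        apply Finset.sum_le_sum
        intro m hm
        exact mul_le_mul_of_nonneg_left (hno m hm) (le_of_lt (ht m))
      linarith
    obtain ⟨i, hiX, hilt⟩ := hex2
    have hyγipos : 0 < yγ i := lt_of_le_of_lt (hyX01 i).1 hilt
    have hyXi1 : yX i < 1 := lt_of_lt_of_le hilt (hyγ01 i).2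
    have hρi : h i ≤ ρ := by
      by_contra hcc
      push_neg at hcc
      have := (hρ i hiX).1 hcc
      linarith
    have hkX : k ∉ X := Finset.mem_compl.mp (Finset.mem_of_mem_erase hk)
    have hik : i ≠ k := by rintro rfl; exact hkX hiX
    have hhik : h i < h k :=
      lt_of_le_of_ne (le_trans hρi hρk) (fun he => hik (hdist he))
    have := kph_exchange t h univ γ yγ ht hyγ01 (by simp) hyγw hoptγ hik
      (Finset.mem_univ _) (Finset.mem_univ _) hyγipos hk1
    linarith
  -- total accepted length bound
  have hbound : (∑ i ∈ (Xᶜ.erase j).filter (fun i => ρ ≤ h i), t i)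
      ≤ ∑ i ∈ Xᶜ.erase j, t i * yγ i := by
    have e : ∑ i ∈ (Xᶜ.erase j).filter (fun i => ρ ≤ h i), t i
        = ∑ i ∈ (Xᶜ.erase j).filter (fun i => ρ ≤ h i), t i * yγ i := by
      apply Finset.sum_congr rfl
      intro k hk
      obtain ⟨hk1, hk2⟩ := Finset.mem_filter.mp hk
      rw [hγall k hk1 hk2, mul_one]
    rw [e]
    apply Finset.sum_le_sum_of_subset_of_nonneg (Finset.filter_subset _ _)
    intro k _ _
    exact mul_nonneg (le_of_lt (ht k)) (hyγ01 k).1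
  refine ⟨part1, by linarith, by linarith [htg j]⟩
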